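/- Let F_q be a finite field, m ≥ 1, 1 ≤ d ≤ m(q-1)+1, write d-1 = t(q-1)+s with t ≥ 0, 0 ≤ s < q-1, and let ω_1,…,ω_s be distinct elements of F_q. Then the polynomial G := X_t · ∏_{i=0}^{t-1}(X_i^{q-1} − X_t^{q-1}) · ∏_{j=1}^{s}(X_{t+1} − ω_j X_t) is homogeneous of degree d and its number of non-zeros in P^m(F_q) is exactly (q−s)q^{m−t−1}. -/

import Mathlib

/-- `v` is the standard representative of a point of projective space:
its last nonzero coordinate equals `1`. -/
def IsRep {K : Type} [Field K] {n : ℕ} (v : Fin n → K) : Prop :=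
  ∃ i, v i = 1 ∧ ∀ j, i < j → v j = 0

instance {K : Type} [Field K] [DecidableEq K] {n : ℕ} (v : Fin n → K) :
    Decidable (IsRep v) := by unfold IsRep; infer_instance

open Finset

/-- Auxiliary: each projective point (scaling class) of a scaling-invariant set contains
exactly one standard representative, so the affine count is `(q-1)` times the
projective count. -/
theorem card_isRep_mul {K : Type} [Field K] [Fintype K] [DecidableEq K] {n : ℕ}
    (Q : (Fin (n + 1) → K) → Prop) [DecidablePred Q]
    (hscale : ∀ (c : K), c ≠ 0 → ∀ v, Q v → Q (c • v))
    (hne : ∀ v, Q v → v ≠ 0) :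
    Fintype.card {v : Fin (n + 1) → K // Q v}
      = (Fintype.card K - 1) * Fintype.card {v : Fin (n + 1) → K // IsRep v ∧ Q v} := by
  classical
  set F : Kˣ × {v : Fin (n + 1) → K // IsRep v ∧ Q v} → {v : Fin (n + 1) → K // Q v} :=
    fun p => ⟨(p.1 : K) • p.2.1, hscale _ p.1.ne_zero _ p.2.2.2⟩ with hF
  have happ : ∀ (p : Kˣ × {v : Fin (n + 1) → K // IsRep v ∧ Q v}) (j : Fin (n+1)),
      (F p).1 j = (p.1 : K) * p.2.1 j := fun p j => rfl
  have hinj : Function.Injective F := by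
    rintro ⟨c, w⟩ ⟨c', w'⟩ h
    have h' : ∀ j, (c : K) * w.1 j = (c' : K) * w'.1 j := by
      intro j
      have := congrArg Subtype.val h
      simpa [happ] using congrFun this j
    obtain ⟨i, hi1, hi2⟩ := w.2.1
    obtain ⟨i', hi1', hi2'⟩ := w'.2.1
    have hii' : i = i' := by
      by_contra hne'
      rcases lt_or_gt_of_ne hne' with hlt | hgt
      · have := h' i'
        rw [hi2 i' hlt, hi1', mul_zero, mul_one] at this
        exact c'.ne_zero this.symm
      · have := h' i
        rw [hi1, hi2' i hgt, mul_zero, mul_one] at this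
        exact c.ne_zero this
    have hc : (c : K) = c' := by
      have := h' i
      rw [hi1, hii', hi1', mul_one, mul_one] at this
      exact this
    refine Prod.ext (Units.ext hc) (Subtype.ext ?_)
    funext j
    have := h' j
    rw [hc] at this
    exact mul_left_cancel₀ c'.ne_zero this
  have hsurj : Function.Surjective F := by
    rintro ⟨v, hv⟩
    have hvne : v ≠ 0 := hne v hv
    have hnonempty : (univ.filter (fun i => v i ≠ 0)).Nonempty := by
      rcases Function.ne_iff.mp hvne with ⟨i, hi⟩
      exact ⟨i, by simpa using hi⟩
    set k : Fin (n + 1) := (univ.filter (fun i => v i ≠ 0)).max' hnonempty with hk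
    have hk1 : v k ≠ 0 := by
      have := Finset.max'_mem _ hnonempty
      simpa using this
    have hk2 : ∀ j, k < j → v j = 0 := by
      intro j hj
      by_contra h
      exact absurd (Finset.le_max' _ j (by simpa using h)) (not_le.mpr hj)
    refine ⟨⟨Units.mk0 (v k) hk1, ⟨(v k)⁻¹ • v, ⟨⟨k, by simp [inv_mul_cancel₀ hk1],
      fun j hj => by simp [hk2 j hj]⟩, hscale _ (inv_ne_zero hk1) _ hv⟩⟩⟩, ?_⟩
    refine Subtype.ext ?_
    funext j
    simp only [happ, Units.val_mk0, Pi.smul_apply, smul_eq_mul]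
    rw [← mul_assoc, mul_inv_cancel₀ hk1, one_mul]
  rw [← Fintype.card_congr (Equiv.ofBijective F ⟨hinj, hsurj⟩), Fintype.card_prod,
    Fintype.card_units]

/-- Auxiliary: the number of standard representatives `v` with `v_i = 0` for `i < t`,
`v_t ≠ 0` and `v_{t+1} ≠ ω_j v_t`. -/
theorem card_P {K : Type} [Field K] [Fintype K] [DecidableEq K] {m t s : ℕ}
    (htm : t < m) (q : ℕ) (hq : Fintype.card K = q)
    (ω : Fin s → K) (hω : Function.Injective ω) :
    Fintype.card {v : Fin (m + 1) → K //
        (∀ i : Fin (m + 1), (i : ℕ) < t → v i = 0) ∧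
        v ⟨t, by omega⟩ ≠ 0 ∧
        ∀ j : Fin s, v ⟨t + 1, by omega⟩ ≠ ω j * v ⟨t, by omega⟩}
      = (q - 1) * ((q - s) * q ^ (m - t - 1)) := by
  classical
  set F : Kˣ × {u : K // ∀ j : Fin s, u ≠ ω j} × (Fin (m - t - 1) → K) → (Fin (m + 1) → K) :=
    fun p i => if h1 : (i : ℕ) < t then 0 else if h2 : (i : ℕ) = t then (p.1 : K)
      else if h3 : (i : ℕ) = t + 1 then (p.1 : K) * p.2.1.1
      else (p.1 : K) * p.2.2 ⟨(i : ℕ) - (t + 2), by have h4 := i.2; omega⟩ with hFdef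
  have hFlt : ∀ p (i : Fin (m + 1)), (i : ℕ) < t → F p i = 0 := by
    intro p i h
    simp only [hFdef]
    rw [dif_pos h]
  have hFt : ∀ p, F p ⟨t, by omega⟩ = (p.1 : K) := by
    intro p
    simp only [hFdef]
    rw [dif_neg (by omega)]
    simp
  have hFt1 : ∀ p, F p ⟨t + 1, by omega⟩ = (p.1 : K) * p.2.1.1 := by
    intro p
    simp only [hFdef]
    rw [dif_neg (by omega), dif_neg (by omega)]
    simp
  have hFge : ∀ p (j : Fin (m - t - 1)),
      F p ⟨t + 2 + (j : ℕ), by have := j.2; omega⟩ = (p.1 : K) * p.2.2 j := by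
    intro p j
    simp only [hFdef]
    rw [dif_neg (by omega), dif_neg (by omega), dif_neg (by omega)]
    congr 1
    exact congrArg p.2.2 (Fin.ext (by show t + 2 + (j : ℕ) - (t + 2) = (j : ℕ); omega))
  have hmem : ∀ p, (∀ i : Fin (m + 1), (i : ℕ) < t → F p i = 0) ∧
      F p ⟨t, by omega⟩ ≠ 0 ∧
      ∀ j : Fin s, F p ⟨t + 1, by omega⟩ ≠ ω j * F p ⟨t, by omega⟩ := by
    intro p
    refine ⟨hFlt p, by rw [hFt]; exact p.1.ne_zero, fun j => ?_⟩
    rw [hFt1, hFt]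
    intro hcon
    exact p.2.1.2 j (mul_left_cancel₀ p.1.ne_zero (hcon.trans (mul_comm _ _)))
  set G : Kˣ × {u : K // ∀ j : Fin s, u ≠ ω j} × (Fin (m - t - 1) → K) →
      {v : Fin (m + 1) → K //
        (∀ i : Fin (m + 1), (i : ℕ) < t → v i = 0) ∧
        v ⟨t, by omega⟩ ≠ 0 ∧
        ∀ j : Fin s, v ⟨t + 1, by omega⟩ ≠ ω j * v ⟨t, by omega⟩} :=
    fun p => ⟨F p, hmem p⟩ with hGdef
  have hinj : Function.Injective G := by
    rintro ⟨c, u, w⟩ ⟨c', u', w'⟩ h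
    have h' : F (c, u, w) = F (c', u', w') := congrArg Subtype.val h
    have hc : (c : K) = (c' : K) := by
      have := congrFun h' ⟨t, by omega⟩
      rwa [hFt, hFt] at this
    have hu : u.1 = u'.1 := by
      have := congrFun h' ⟨t + 1, by omega⟩
      rw [hFt1, hFt1, hc] at this
      exact mul_left_cancel₀ c'.ne_zero this
    have hw : w = w' := by
      funext j
      have := congrFun h' ⟨t + 2 + (j : ℕ), by have := j.2; omega⟩
      rw [hFge, hFge, hc] at this
      exact mul_left_cancel₀ c'.ne_zero this
    exact Prod.ext (Units.ext hc) (Prod.ext (Subtype.ext hu) hw)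
  have hsurj : Function.Surjective G := by
    rintro ⟨v, h1, h2, h3⟩
    refine ⟨⟨Units.mk0 (v ⟨t, by omega⟩) h2,
      ⟨v ⟨t + 1, by omega⟩ / v ⟨t, by omega⟩, fun j hj => h3 j ((div_eq_iff h2).mp hj)⟩,
      fun j => v ⟨t + 2 + (j : ℕ), by have := j.2; omega⟩ / v ⟨t, by omega⟩⟩, ?_⟩
    refine Subtype.ext ?_
    funext i
    show F _ i = v i
    by_cases hi1 : (i : ℕ) < t
    · rw [hFlt _ _ hi1, h1 i hi1]
    · by_cases hi2 : (i : ℕ) = t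
      · have : i = ⟨t, by omega⟩ := Fin.ext hi2
        rw [this, hFt]
        rfl
      · by_cases hi3 : (i : ℕ) = t + 1
        · have : i = ⟨t + 1, by omega⟩ := Fin.ext hi3
          rw [this, hFt1]
          rw [mul_comm]
          exact div_mul_cancel₀ _ h2
        · simp only [hFdef]
          rw [dif_neg hi1, dif_neg hi2, dif_neg hi3]
          have hidx : (⟨t + 2 + ((i : ℕ) - (t + 2)), by have := i.2; omega⟩ : Fin (m + 1)) = i :=
            Fin.ext (by show t + 2 + ((i : ℕ) - (t + 2)) = (i : ℕ); have := i.2; omega)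
          rw [hidx, mul_comm]
          exact div_mul_cancel₀ _ h2
  rw [← Fintype.card_congr (Equiv.ofBijective G ⟨hinj, hsurj⟩), Fintype.card_prod,
    Fintype.card_prod, Fintype.card_units, hq]
  congr 2
  · rw [Fintype.card_subtype]
    have : univ.filter (fun u : K => ∀ j : Fin s, u ≠ ω j) = univ \ Finset.image ω univ := by
      ext u
      simp [eq_comm]
    rw [this, Finset.card_sdiff_of_subset (Finset.subset_univ _),
      Finset.card_image_of_injective _ hω]
    simp [hq]
  · rw [Fintype.card_fun, Fintype.card_fin, hq]

open MvPolynomial in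
open Fin.NatCast in
/-- The polynomial `G = X_t ∏_{i<t}(X_i^{q-1} − X_t^{q-1}) ∏_{j=1}^{s}(X_{t+1} − ω_j X_t)`
is homogeneous of degree `d` and has exactly `(q−s)q^{m−t−1}` non-zeros in `P^m(F_q)`. -/
theorem PRM_min_weight_example (K : Type) [Field K] [Fintype K] [DecidableEq K]
    (q : ℕ) (hq : Fintype.card K = q) (m d t s : ℕ) (hm : 1 ≤ m)
    (hd1 : 1 ≤ d) (hd2 : d ≤ m * (q - 1) + 1)
    (hts : d - 1 = t * (q - 1) + s) (hs : s < q - 1)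
    (ω : Fin s → K) (hω : Function.Injective ω) :
    (X ((t : ℕ) : Fin (m + 1)) *
        (∏ i ∈ Finset.range t,
          (X ((i : ℕ) : Fin (m + 1)) ^ (q - 1) - X ((t : ℕ) : Fin (m + 1)) ^ (q - 1))) *
        ∏ j : Fin s,
          (X ((t + 1 : ℕ) : Fin (m + 1)) - C (ω j) * X ((t : ℕ) : Fin (m + 1)))
        : MvPolynomial (Fin (m + 1)) K).IsHomogeneous d ∧
    (((Finset.univ.filter
        (fun p : {v : Fin (m + 1) → K // IsRep v} =>
          MvPolynomial.eval p.1
            (X ((t : ℕ) : Fin (m + 1)) *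
              (∏ i ∈ Finset.range t,
                (X ((i : ℕ) : Fin (m + 1)) ^ (q - 1) -
                  X ((t : ℕ) : Fin (m + 1)) ^ (q - 1))) *
              ∏ j : Fin s,
                (X ((t + 1 : ℕ) : Fin (m + 1)) -
                  C (ω j) * X ((t : ℕ) : Fin (m + 1)))) ≠ 0)).card : ℚ))
      = ((q : ℚ) - s) * (q : ℚ) ^ ((m : ℤ) - t - 1) := by
  classical
  have hq2 : 2 ≤ q := by omega
  have hkey : t * (q - 1) + s ≤ m * (q - 1) := by omega
  have htm : t ≤ m := by
    by_contra h
    have h2 : (m + 1) * (q - 1) ≤ t * (q - 1) := Nat.mul_le_mul_right _ (by omega)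
    have h3 : (m + 1) * (q - 1) = m * (q - 1) + (q - 1) := by ring
    omega
  have hts0 : t = m → s = 0 := by
    intro h
    rw [h] at hkey
    omega
  constructor
  · -- Homogeneity
    have hA : MvPolynomial.IsHomogeneous
        (∏ i ∈ Finset.range t,
          ((X ((i : ℕ) : Fin (m + 1)) : MvPolynomial (Fin (m + 1)) K) ^ (q - 1) -
            X ((t : ℕ) : Fin (m + 1)) ^ (q - 1))) (t * (q - 1)) := by
      have := MvPolynomial.IsHomogeneous.prod (Finset.range t)
        (fun i => (X ((i : ℕ) : Fin (m + 1)) : MvPolynomial (Fin (m + 1)) K) ^ (q - 1) -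
          X ((t : ℕ) : Fin (m + 1)) ^ (q - 1)) (fun _ => q - 1)
        (fun i _ => (MvPolynomial.isHomogeneous_X_pow _ _).sub
          (MvPolynomial.isHomogeneous_X_pow _ _))
      simpa [mul_comm] using this
    have hB : MvPolynomial.IsHomogeneous
        (∏ j : Fin s,
          ((X ((t + 1 : ℕ) : Fin (m + 1)) : MvPolynomial (Fin (m + 1)) K) -
            C (ω j) * X ((t : ℕ) : Fin (m + 1)))) s := by
      have := MvPolynomial.IsHomogeneous.prod (Finset.univ : Finset (Fin s))
        (fun j => (X ((t + 1 : ℕ) : Fin (m + 1)) : MvPolynomial (Fin (m + 1)) K) -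
          C (ω j) * X ((t : ℕ) : Fin (m + 1))) (fun _ => 1)
        (fun j _ => (MvPolynomial.isHomogeneous_X _ _).sub
          (MvPolynomial.isHomogeneous_C_mul_X _ _))
      simpa using this
    have h := ((MvPolynomial.isHomogeneous_X K ((t : ℕ) : Fin (m + 1))).mul hA).mul hB
    have hdeq : d = 1 + t * (q - 1) + s := by omega
    rw [hdeq]
    exact h
  · -- Counting
    have ht1 : t < m + 1 := by omega
    have hq1 : 0 < q - 1 := by omega
    have hsq : s ≤ q := by omega
    have hqQ : (q : ℚ) ≠ 0 := Nat.cast_ne_zero.mpr (by omega)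
    have hzz : t < m → (m : ℤ) - t - 1 = ((m - t - 1 : ℕ) : ℤ) := fun h => by omega
    have hmz : t = m → (m : ℤ) - t - 1 = -1 := fun h => by omega
    have hlt_of_ne : ∀ i : Fin (m + 1), t = m → (i : ℕ) ≠ t → (i : ℕ) < t :=
      fun i h hne => by have := i.2; omega
    have hnotgt : ∀ j : Fin (m + 1), t = m → ¬ (t < (j : ℕ)) :=
      fun j h => by have := j.2; omega
    have hT : ((t : ℕ) : Fin (m + 1)) = ⟨t, ht1⟩ :=
      Fin.ext (Fin.val_cast_of_lt ht1)
    have hpow1 : ∀ x : K, x ≠ 0 → x ^ (q - 1) = 1 := fun x hx => by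
      rw [← hq]; exact FiniteField.pow_card_sub_one_eq_one x hx
    have hpow0 : (0 : K) ^ (q - 1) = 0 := zero_pow (by omega)
    have key : ∀ v : Fin (m + 1) → K,
        (MvPolynomial.eval v
            (X ((t : ℕ) : Fin (m + 1)) *
              (∏ i ∈ Finset.range t,
                (X ((i : ℕ) : Fin (m + 1)) ^ (q - 1) -
                  X ((t : ℕ) : Fin (m + 1)) ^ (q - 1))) *
              ∏ j : Fin s,
                (X ((t + 1 : ℕ) : Fin (m + 1)) -
                  C (ω j) * X ((t : ℕ) : Fin (m + 1)))) ≠ 0) ↔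
          ((∀ i : Fin (m + 1), (i : ℕ) < t → v i = 0) ∧
            v ((t : ℕ) : Fin (m + 1)) ≠ 0 ∧
            ∀ j : Fin s, v ((t + 1 : ℕ) : Fin (m + 1)) ≠
              ω j * v ((t : ℕ) : Fin (m + 1))) := by
      intro v
      have heval : MvPolynomial.eval v
            (X ((t : ℕ) : Fin (m + 1)) *
              (∏ i ∈ Finset.range t,
                (X ((i : ℕ) : Fin (m + 1)) ^ (q - 1) -
                  X ((t : ℕ) : Fin (m + 1)) ^ (q - 1))) *
              ∏ j : Fin s,
                (X ((t + 1 : ℕ) : Fin (m + 1)) -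
                  C (ω j) * X ((t : ℕ) : Fin (m + 1))))
          = v ((t : ℕ) : Fin (m + 1)) *
              (∏ i ∈ Finset.range t,
                (v ((i : ℕ) : Fin (m + 1)) ^ (q - 1) -
                  v ((t : ℕ) : Fin (m + 1)) ^ (q - 1))) *
              ∏ j : Fin s,
                (v ((t + 1 : ℕ) : Fin (m + 1)) -
                  ω j * v ((t : ℕ) : Fin (m + 1))) := by
        simp
      rw [heval, mul_ne_zero_iff, mul_ne_zero_iff, Finset.prod_ne_zero_iff,
        Finset.prod_ne_zero_iff]
      constructor
      · rintro ⟨⟨hvT, hprod⟩, hprod2⟩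
        refine ⟨fun i hi => ?_, hvT, fun j => sub_ne_zero.mp (hprod2 j (Finset.mem_univ j))⟩
        have h := hprod (i : ℕ) (Finset.mem_range.mpr hi)
        rw [Fin.cast_val_eq_self i] at h
        by_contra h0
        rw [sub_ne_zero, hpow1 _ h0, hpow1 _ hvT] at h
        exact h rfl
      · rintro ⟨hzero, hvT, hj⟩
        refine ⟨⟨hvT, fun i hi => ?_⟩, fun j _ => sub_ne_zero.mpr (hj j)⟩
        have hlt : i < t := Finset.mem_range.mp hi
        have hvi : v ((i : ℕ) : Fin (m + 1)) = 0 :=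
          hzero _ (by rw [Fin.val_cast_of_lt (by omega)]; exact hlt)
        rw [hvi, sub_ne_zero, hpow0, hpow1 _ hvT]
        exact zero_ne_one
    have hcard : (Finset.univ.filter
        (fun p : {v : Fin (m + 1) → K // IsRep v} =>
          MvPolynomial.eval p.1
            (X ((t : ℕ) : Fin (m + 1)) *
              (∏ i ∈ Finset.range t,
                (X ((i : ℕ) : Fin (m + 1)) ^ (q - 1) -
                  X ((t : ℕ) : Fin (m + 1)) ^ (q - 1))) *
              ∏ j : Fin s,
                (X ((t + 1 : ℕ) : Fin (m + 1)) -
                  C (ω j) * X ((t : ℕ) : Fin (m + 1)))) ≠ 0)).card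
        = Fintype.card {v : Fin (m + 1) → K // IsRep v ∧
            ((∀ i : Fin (m + 1), (i : ℕ) < t → v i = 0) ∧
              v ((t : ℕ) : Fin (m + 1)) ≠ 0 ∧
              ∀ j : Fin s, v ((t + 1 : ℕ) : Fin (m + 1)) ≠
                ω j * v ((t : ℕ) : Fin (m + 1)))} := by
      rw [← Fintype.card_subtype]
      exact Fintype.card_congr ((Equiv.subtypeSubtypeEquivSubtypeInter _ _).trans
        (Equiv.subtypeEquivRight fun v => and_congr_right fun _ => key v))
    rw [hcard]
    clear hcard key
    rcases lt_or_eq_of_le htm with hlt | heq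
    · -- t < m
      have ht2 : t + 1 < m + 1 := Nat.succ_lt_succ hlt
      have hT' : ((t + 1 : ℕ) : Fin (m + 1)) = ⟨t + 1, ht2⟩ :=
        Fin.ext (Fin.val_cast_of_lt ht2)
      have hcc : Fintype.card {v : Fin (m + 1) → K // IsRep v ∧
            ((∀ i : Fin (m + 1), (i : ℕ) < t → v i = 0) ∧
              v ((t : ℕ) : Fin (m + 1)) ≠ 0 ∧
              ∀ j : Fin s, v ((t + 1 : ℕ) : Fin (m + 1)) ≠
                ω j * v ((t : ℕ) : Fin (m + 1)))}
          = Fintype.card {v : Fin (m + 1) → K // IsRep v ∧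
            ((∀ i : Fin (m + 1), (i : ℕ) < t → v i = 0) ∧
              v ⟨t, ht1⟩ ≠ 0 ∧
              ∀ j : Fin s, v ⟨t + 1, ht2⟩ ≠ ω j * v ⟨t, ht1⟩)} :=
        Fintype.card_congr (Equiv.subtypeEquivRight fun v => by rw [hT, hT'])
      rw [hcc]
      clear hcc
      have hscale : ∀ (c : K), c ≠ 0 → ∀ v : Fin (m + 1) → K,
          ((∀ i : Fin (m + 1), (i : ℕ) < t → v i = 0) ∧
            v ⟨t, ht1⟩ ≠ 0 ∧
            ∀ j : Fin s, v ⟨t + 1, ht2⟩ ≠ ω j * v ⟨t, ht1⟩) →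
          ((∀ i : Fin (m + 1), (i : ℕ) < t → (c • v) i = 0) ∧
            (c • v) ⟨t, ht1⟩ ≠ 0 ∧
            ∀ j : Fin s, (c • v) ⟨t + 1, ht2⟩ ≠ ω j * (c • v) ⟨t, ht1⟩) := by
        intro c hc v hv
        refine ⟨fun i hi => ?_, ?_, fun j hcon => ?_⟩
        · show c * v i = 0
          rw [hv.1 i hi, mul_zero]
        · show c * v ⟨t, ht1⟩ ≠ 0
          exact mul_ne_zero hc hv.2.1
        · apply hv.2.2 j
          have hcon' : c * v ⟨t + 1, ht2⟩ = c * (ω j * v ⟨t, ht1⟩) := by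
            have hr : (c • v) ⟨t + 1, ht2⟩ = c * v ⟨t + 1, ht2⟩ := rfl
            rw [← hr, hcon]
            show ω j * (c * v ⟨t, ht1⟩) = _
            ring
          exact mul_left_cancel₀ hc hcon'
      have hne : ∀ v : Fin (m + 1) → K,
          ((∀ i : Fin (m + 1), (i : ℕ) < t → v i = 0) ∧
            v ⟨t, ht1⟩ ≠ 0 ∧
            ∀ j : Fin s, v ⟨t + 1, ht2⟩ ≠ ω j * v ⟨t, ht1⟩) → v ≠ 0 :=
        fun v hv h0 => hv.2.1 (by rw [h0]; rfl)
      have h1 := card_isRep_mul (n := m)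
        (fun v : Fin (m + 1) → K =>
          (∀ i : Fin (m + 1), (i : ℕ) < t → v i = 0) ∧
            v ⟨t, ht1⟩ ≠ 0 ∧
            ∀ j : Fin s, v ⟨t + 1, ht2⟩ ≠ ω j * v ⟨t, ht1⟩) hscale hne
      have h2 := card_P hlt q hq ω hω
      rw [hq] at h1
      have hN : Fintype.card {v : Fin (m + 1) → K // IsRep v ∧
            ((∀ i : Fin (m + 1), (i : ℕ) < t → v i = 0) ∧
              v ⟨t, ht1⟩ ≠ 0 ∧
              ∀ j : Fin s, v ⟨t + 1, ht2⟩ ≠ ω j * v ⟨t, ht1⟩)}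
          = (q - s) * q ^ (m - t - 1) :=
        Nat.eq_of_mul_eq_mul_left hq1 (h1.symm.trans h2)
      rw [hN, hzz hlt, zpow_natCast, Nat.cast_mul, Nat.cast_pow, Nat.cast_sub hsq]
    · -- t = m
      have hs0 : s = 0 := hts0 heq
      have hone : Fintype.card {v : Fin (m + 1) → K // IsRep v ∧
          ((∀ i : Fin (m + 1), (i : ℕ) < t → v i = 0) ∧
            v ((t : ℕ) : Fin (m + 1)) ≠ 0 ∧
            ∀ j : Fin s, v ((t + 1 : ℕ) : Fin (m + 1)) ≠
              ω j * v ((t : ℕ) : Fin (m + 1)))} = 1 := by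
        rw [Fintype.card_eq_one_iff]
        refine ⟨⟨fun i => if (i : ℕ) = t then 1 else 0, ⟨⟨t, ht1⟩, by simp, fun j hj => ?_⟩,
          fun i hi => ?_, ?_, fun j => ?_⟩, ?_⟩
        · exact absurd hj (hnotgt j heq)
        · show (if (i : ℕ) = t then (1 : K) else 0) = 0
          rw [if_neg (Nat.ne_of_lt hi)]
        · rw [hT]
          show (if t = t then (1 : K) else 0) ≠ 0
          rw [if_pos rfl]
          exact one_ne_zero
        · exact absurd j.2 (by omega)
        · rintro ⟨y, ⟨i₀, hy1, hy2⟩, hP1, hP2, -⟩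
          refine Subtype.ext ?_
          show y = fun i : Fin (m + 1) => if (i : ℕ) = t then (1 : K) else 0
          funext i
          have hi₀ : (i₀ : ℕ) = t := by
            by_contra hne'
            have h0 := hP1 i₀ (hlt_of_ne i₀ heq hne')
            rw [hy1] at h0
            exact one_ne_zero h0
          by_cases hi : (i : ℕ) = t
          · have hii : i = i₀ := Fin.ext (hi.trans hi₀.symm)
            show y i = if (i : ℕ) = t then (1 : K) else 0
            rw [if_pos hi, hii, hy1]
          · show y i = if (i : ℕ) = t then (1 : K) else 0
            rw [if_neg hi]
            exact hP1 i (hlt_of_ne i heq hi)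
      rw [hone, hs0, hmz heq, Nat.cast_zero, sub_zero, zpow_neg, zpow_one,
        mul_inv_cancel₀ hqQ, Nat.cast_one]
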